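/- Let A be the set of Hahn series x ∈ HahnSeries ℝ (ZMod 2) such that for every real number N, the set of elements of the support of x that are smaller than N is finite. Then A is a subfield of the field HahnSeries ℝ (ZMod 2): it contains 0 and 1, is closed under addition and multiplication, and for every nonzero x ∈ A the inverse x⁻¹ (taken in the field HahnSeries ℝ (ZMod 2)) again lies in A. In particular, the Novikov ring A of formal power series ∑_{r∈ℝ} a_r T^r with a_r ∈ ℤ/2 and only finitely many nonzero a_r with r < N for each N ∈ ℝ, is a field. -/

import Mathlib

open HahnSeries

abbrev K := HahnSeries ℝ (ZMod 2)

def Nov (x : K) : Prop := ∀ N : ℝ, {r ∈ x.support | r < N}.Finite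

lemma nov_zero : Nov 0 := by
  intro N; simp [Nov, HahnSeries.support_zero]

lemma nov_one : Nov 1 := by
  intro N
  exact ((Set.finite_singleton (0:ℝ)).subset (by rw [HahnSeries.support_one])).subset
    (fun r hr => hr.1)

lemma nov_single (a : ℝ) (c : ZMod 2) : Nov (HahnSeries.single a c) := by
  intro N
  exact ((Set.finite_singleton a).subset HahnSeries.support_single_subset).subset
    (fun r hr => hr.1)

lemma nov_add {x y : K} (hx : Nov x) (hy : Nov y) : Nov (x + y) := by
  intro N
  apply ((hx N).union (hy N)).subset
  rintro r ⟨hr, hrN⟩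
  rcases HahnSeries.support_add_subset x y hr with h | h
  · exact Or.inl ⟨h, hrN⟩
  · exact Or.inr ⟨h, hrN⟩

lemma nov_neg {x : K} (hx : Nov x) : Nov (-x) := by
  intro N; simpa [HahnSeries.support_neg] using hx N

lemma nov_mul {x y : K} (hx : Nov x) (hy : Nov y) : Nov (x * y) := by
  intro N
  by_cases h0x : x = 0
  · simp [h0x]
  by_cases h0y : y = 0
  · simp [h0y]
  apply (Set.Finite.image2 (· + ·) (hx (N - y.order)) (hy (N - x.order))).subset
  rintro r ⟨hr, hrN⟩
  obtain ⟨a, ha, b, hb, rfl⟩ := HahnSeries.support_mul_subset hr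
  have hab : a + b < N := hrN
  have hao : x.order ≤ a := HahnSeries.order_le_of_coeff_ne_zero ha
  have hbo : y.order ≤ b := HahnSeries.order_le_of_coeff_ne_zero hb
  exact ⟨a, ⟨ha, by linarith⟩, b, ⟨hb, by linarith⟩, rfl⟩

lemma nov_pow {x : K} (hx : Nov x) : ∀ n : ℕ, Nov (x ^ n) := by
  intro n
  induction n with
  | zero => simpa using nov_one
  | succ n ih => rw [pow_succ]; exact nov_mul ih hx

lemma pow_support_bound {y : K} (n : ℕ) {r : ℝ} (hr : r ∈ (y ^ n).support) :
    (n : ℝ) * y.order ≤ r := by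
  induction n generalizing r with
  | zero =>
      rw [pow_zero, HahnSeries.support_one, Set.mem_singleton_iff] at hr
      simp [hr]
  | succ n ih =>
      rw [pow_succ] at hr
      obtain ⟨a, ha, b, hb, rfl⟩ := HahnSeries.support_mul_subset hr
      have h1 := ih ha
      have h2 : y.order ≤ b := HahnSeries.order_le_of_coeff_ne_zero hb
      push_cast
      nlinarith

lemma nov_hsum_powers {y : K} (hy : 0 < y.orderTop) (hyn : Nov y) :
    Nov (HahnSeries.SummableFamily.powers y).hsum := by
  by_cases h0 : y = 0
  · have h := HahnSeries.SummableFamily.one_sub_self_mul_hsum_powers hy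
    have h1 : (1 : K) - y = 1 := by rw [h0, sub_zero]
    rw [h1, one_mul] at h
    rw [h]; exact nov_one
  have hoy : (0 : ℝ) < y.order := by
    have := hy
    rw [← order_eq_orderTop_of_ne_zero h0] at this
    exact_mod_cast this
  intro N
  obtain ⟨k, hk⟩ := exists_nat_ge (N / y.order)
  have hNk : N ≤ (k : ℝ) * y.order := by
    rw [div_le_iff₀ hoy] at hk; linarith
  apply (Set.Finite.biUnion (Set.finite_Iio k) (fun n _ => nov_pow hyn n N)).subset
  rintro r ⟨hr, hrN⟩
  have : ∃ n : ℕ, (y ^ n).coeff r ≠ 0 := by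
    by_contra hc
    push_neg at hc
    apply hr
    rw [HahnSeries.SummableFamily.coeff_hsum]
    simp only [HahnSeries.SummableFamily.coe_powers hy]
    exact finsum_eq_zero_of_forall_eq_zero hc
  obtain ⟨n, hn⟩ := this
  have hbd := pow_support_bound n (hn : r ∈ (y ^ n).support)
  have hnk : n < k := by
    by_contra hle
    push_neg at hle
    have : (k : ℝ) * y.order ≤ (n : ℝ) * y.order := by
      apply mul_le_mul_of_nonneg_right (by exact_mod_cast hle) hoy.le
    linarith
  exact Set.mem_biUnion hnk ⟨hn, hrN⟩

lemma nov_inv {x : K} (hx : Nov x) (h0 : x ≠ 0) : Nov x⁻¹ := by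
  set s : K := HahnSeries.single (-x.order) (x.leadingCoeff)⁻¹ with hs
  have hy : 0 < (1 - s * x).orderTop :=
    HahnSeries.unit_aux x (inv_mul_cancel₀ (HahnSeries.leadingCoeff_ne_zero.mpr h0)) _ (neg_add_cancel x.order)
  have hyn : Nov (1 - s * x) := by
    rw [sub_eq_add_neg]
    exact nov_add nov_one (nov_neg (nov_mul (nov_single _ _) hx))
  have h := HahnSeries.SummableFamily.one_sub_self_mul_hsum_powers hy
  rw [sub_sub_cancel] at h
  have hinv : x⁻¹ = s * (HahnSeries.SummableFamily.powers (1 - s * x)).hsum := by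
    apply inv_eq_of_mul_eq_one_right
    rw [← mul_assoc, mul_comm x s, h]
  rw [hinv]
  exact nov_mul (nov_single _ _) (nov_hsum_powers hy hyn)

theorem novikov_ring_is_subfield
    (A : Set (HahnSeries ℝ (ZMod 2)))
    (hA : A = {x : HahnSeries ℝ (ZMod 2) |
        ∀ N : ℝ, {r ∈ x.support | r < N}.Finite}) :
    (0 : HahnSeries ℝ (ZMod 2)) ∈ A ∧
    (1 : HahnSeries ℝ (ZMod 2)) ∈ A ∧
    (∀ x ∈ A, ∀ y ∈ A, x + y ∈ A) ∧
    (∀ x ∈ A, ∀ y ∈ A, x * y ∈ A) ∧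
    (∀ x ∈ A, x ≠ 0 → x⁻¹ ∈ A) ∧
    ∃ F : Subfield (HahnSeries ℝ (ZMod 2)), (F : Set (HahnSeries ℝ (ZMod 2))) = A := by
  subst hA
  refine ⟨nov_zero, nov_one, fun x hx y hy => nov_add hx hy,
    fun x hx y hy => nov_mul hx hy, fun x hx h0 => nov_inv hx h0, ?_⟩
  refine ⟨⟨⟨⟨⟨⟨{x : HahnSeries ℝ (ZMod 2) | Nov x}, fun {a b} ha hb => nov_mul ha hb⟩, nov_one⟩,
    fun {a b} ha hb => nov_add ha hb, nov_zero⟩,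
    fun {a} ha => nov_neg ha⟩, ?_⟩, rfl⟩
  intro x hx
  by_cases h0 : x = 0
  · simpa [h0] using nov_zero
  · exact nov_inv hx h0
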